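/- For every nonnegative integer n and real x with 0 < x < 1, Bₙ(x) := ∑_{j=0}^∞ binom(n+j, j) ((−1)^j (1/2)_j / ((2(n+j)+3) j!)) x^j equals (1/(2 x^{n+3/2})) ∫₀^x (t^{n+1/2}/√(1+t)) · ₂F₁(−n, 1/2; 1; t/(1+t)) dt. -/

import Mathlib

open scoped Nat

/-- Pochhammer symbol `(a)_j` for real `a`. -/
noncomputable def poch (a : ℝ) (j : ℕ) : ℝ := (ascPochhammer ℝ j).eval a

/-- The terminating hypergeometric polynomial `₂F₁(-n, 1/2; 1; y)`. -/
noncomputable def F (n : ℕ) (y : ℝ) : ℝ :=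
  ∑ j ∈ Finset.range (n + 1),
    poch (-(n : ℝ)) j * poch (1/2) j / ((j ! : ℝ) ^ 2) * y ^ j

lemma poch_zero (a : ℝ) : poch a 0 = 1 := by simp [poch]

lemma poch_succ (a : ℝ) (j : ℕ) : poch a (j + 1) = poch a j * (a + j) :=
  ascPochhammer_succ_eval j a

lemma poch_pos {a : ℝ} (ha : 0 < a) (j : ℕ) : 0 < poch a j := by
  induction j with
  | zero => simp [poch_zero]
  | succ j ih => rw [poch_succ]; positivity

lemma poch_mul (a : ℝ) (k m : ℕ) : poch a k * poch (a + k) m = poch a (k + m) := by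
  have h := congrArg (Polynomial.eval a) (ascPochhammer_mul (S := ℝ) k m)
  simpa [poch, Polynomial.eval_comp] using h

lemma poch_le {a b : ℝ} (ha : 0 < a) (hab : a ≤ b) (m : ℕ) : poch a m ≤ poch b m := by
  induction m with
  | zero => simp [poch_zero]
  | succ m ih =>
    rw [poch_succ, poch_succ]
    have h1 : (0:ℝ) < poch a m := poch_pos ha m
    have : (0:ℝ) ≤ a + m := by positivity
    apply mul_le_mul ih (by linarith) this ((poch_pos (lt_of_lt_of_le ha hab) m).le)

lemma poch_nat_choose (K m : ℕ) : poch ((K : ℝ) + 1) m = (m ! : ℝ) * ((K + m).choose m) := by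
  have h1 : poch ((K : ℝ) + 1) m = (((ascPochhammer ℕ m).eval (K + 1) : ℕ) : ℝ) := by
    rw [ascPochhammer_eval_cast]; norm_num [poch]
  rw [h1, ascPochhammer_nat_eq_ascFactorial, Nat.ascFactorial_eq_factorial_mul_choose]
  push_cast; ring

lemma poch_one (m : ℕ) : poch 1 m = (m ! : ℝ) := by
  have := poch_nat_choose 0 m
  simpa using this

lemma summable_poch_aux (s : ℝ) (hs : 0 < s) {ρ : ℝ} (h0 : 0 ≤ ρ) (h1 : ρ < 1) :
    Summable (fun m : ℕ => poch s m / m ! * (m + 1) * ρ ^ m) := by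
  set K : ℕ := ⌈s⌉₊ with hK
  have hsK : s ≤ (K : ℝ) + 1 := le_trans (Nat.le_ceil s) (by rw [← hK]; norm_num)
  -- summable majorant : (K+2) * choose (m + (K+1)) (K+1) * ρ^m
  have hmaj : Summable (fun m : ℕ => ((K:ℝ) + 2) * (((m + (K+1)).choose (K+1) : ℕ) : ℝ) * ρ ^ m) := by
    have := (summable_choose_mul_geometric_of_norm_lt_one (R := ℝ) (K+1)
      (r := ρ) (by rwa [Real.norm_eq_abs, abs_of_nonneg h0]))
    simpa [mul_assoc] using this.mul_left ((K:ℝ) + 2)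
  apply Summable.of_nonneg_of_le _ _ hmaj
  · intro m
    have := poch_pos hs m
    positivity
  · intro m
    have hb : poch s m ≤ (m ! : ℝ) * ((K + m).choose m) := by
      rw [← poch_nat_choose]
      exact poch_le hs hsK m
    have hfac : (0:ℝ) < (m ! : ℝ) := by positivity
    have h2 : poch s m / m ! * (m + 1) ≤ ((K + m).choose m : ℝ) * (m + 1) := by
      apply mul_le_mul_of_nonneg_right _ (by positivity)
      rw [div_le_iff₀ hfac]
      calc poch s m ≤ (m ! : ℝ) * ((K + m).choose m) := hb
        _ = ((K + m).choose m : ℝ) * m ! := by ring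
    have h3 : ((K + m).choose m : ℝ) * (m + 1) ≤ ((K:ℝ) + 2) * ((m + (K+1)).choose (K+1)) := by
      have hnat : (m + 1) * (K + m).choose m ≤ (K + 2) * ((m + (K + 1)).choose (K + 1)) := by
        have e1 : (K + m).choose m = (m + K).choose K := by
          rw [Nat.add_comm K m]
          have := Nat.choose_symm (Nat.le_add_left K m)
          simpa using this
        have hid : (m + K + 1) * (m + K).choose K = (m + K + 1).choose (K + 1) * (K + 1) :=
          Nat.add_one_mul_choose_eq (m + K) K
        have e2 : m + (K + 1) = m + K + 1 := by omega
        rw [e1, e2]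
        calc (m + 1) * (m + K).choose K ≤ (m + K + 1) * (m + K).choose K :=
              Nat.mul_le_mul (by omega) le_rfl
          _ = (m + K + 1).choose (K + 1) * (K + 1) := hid
          _ ≤ (m + K + 1).choose (K + 1) * (K + 2) := Nat.mul_le_mul le_rfl (by omega)
          _ = (K + 2) * (m + K + 1).choose (K + 1) := Nat.mul_comm _ _
      calc ((K + m).choose m : ℝ) * (m + 1) = (((m+1) * (K + m).choose m : ℕ) : ℝ) := by push_cast; ring
        _ ≤ (((K + 2) * ((m + (K+1)).choose (K+1)) : ℕ) : ℝ) := by exact_mod_cast Nat.cast_le.mpr hnat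
        _ = ((K:ℝ) + 2) * ((m + (K+1)).choose (K+1)) := by push_cast; ring
    calc poch s m / m ! * (m + 1) * ρ ^ m ≤ ((K + m).choose m : ℝ) * (m + 1) * ρ ^ m := by
          apply mul_le_mul_of_nonneg_right h2 (by positivity)
      _ ≤ ((K:ℝ) + 2) * ((m + (K+1)).choose (K+1)) * ρ ^ m := by
          apply mul_le_mul_of_nonneg_right h3 (by positivity)

lemma binom_hasSum (s : ℝ) (hs : 0 < s) {t : ℝ} (ht0 : 0 ≤ t) (ht1 : t < 1) :
    HasSum (fun m : ℕ => (-1) ^ m * poch s m / m ! * t ^ m) ((1 + t) ^ (-s) : ℝ) := by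
  set c : ℕ → ℝ := fun m => (-1) ^ m * poch s m / m ! with hc
  have habs : ∀ m, |c m| = poch s m / m ! := by
    intro m
    rw [hc]
    rw [abs_div, abs_mul, abs_pow, abs_neg, abs_one, one_pow, one_mul,
      abs_of_pos (poch_pos hs m), Nat.abs_cast]
  have hc0 : c 0 = 1 := by simp [hc, poch_zero]
  have hrec : ∀ m : ℕ, c (m + 1) * ((m : ℝ) + 1) = -(s + m) * c m := by
    intro m
    have hm : (m ! : ℝ) ≠ 0 := by positivity
    simp only [hc, poch_succ, pow_succ, Nat.factorial_succ]
    push_cast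
    field_simp
  set r : ℝ := (1 + t) / 2 with hrdef
  have hr0 : 0 < r := by rw [hrdef]; linarith
  have htr : t < r := by rw [hrdef]; linarith
  have hr1 : r < 1 := by rw [hrdef]; linarith
  have hmem : ∀ y : ℝ, y ∈ Set.Ioo (-r) r → |y| ≤ r := by
    intro y hy; exact abs_le.2 ⟨hy.1.le, hy.2.le⟩
  have Sr : Summable (fun m : ℕ => poch s m / m ! * (m + 1) * r ^ m) :=
    summable_poch_aux s hs hr0.le hr1
  set u : ℕ → ℝ := fun m => poch s m / m ! * (m + 1) * r ^ (m - 1) with hudef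
  have hu : Summable u := by
    apply Summable.of_nonneg_of_le _ _ (Sr.mul_left (1 / r))
    · intro m
      have := poch_pos hs m
      positivity
    · intro m
      have hp := poch_pos hs m
      match m with
      | 0 =>
        simp only [hudef, poch_zero]
        norm_num
        have hrr : r * r⁻¹ = 1 := mul_inv_cancel₀ hr0.ne'
        nlinarith [inv_pos.mpr hr0]
      | (k + 1) =>
        simp only [hudef]
        have hre : r ^ (k + 1 - 1) = r ^ (k + 1) / r := by
          rw [pow_succ]
          field_simp
          simp
        rw [hre]
        apply le_of_eq
        field_simp
  have hderivg : ∀ (m : ℕ) (y : ℝ), y ∈ Set.Ioo (-r) r →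
      HasDerivAt (fun z : ℝ => c m * z ^ m) (c m * ((m : ℝ) * y ^ (m - 1))) y :=
    fun m y _ => (hasDerivAt_pow m y).const_mul (c m)
  have hbound : ∀ (m : ℕ) (y : ℝ), y ∈ Set.Ioo (-r) r →
      ‖c m * ((m : ℝ) * y ^ (m - 1))‖ ≤ u m := by
    intro m y hy
    rw [Real.norm_eq_abs, abs_mul, abs_mul, habs, abs_pow, Nat.abs_cast]
    have h1 : |y| ^ (m - 1) ≤ r ^ (m - 1) := pow_le_pow_left₀ (abs_nonneg y) (hmem y hy) _
    have hp := (poch_pos hs m).le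
    have hfac : (0:ℝ) ≤ poch s m / m ! := by positivity
    calc poch s m / m ! * ((m:ℝ) * |y| ^ (m-1))
        ≤ poch s m / m ! * (((m:ℝ)+1) * r ^ (m-1)) := by
          apply mul_le_mul_of_nonneg_left _ hfac
          apply mul_le_mul (by linarith) h1 (by positivity) (by linarith)
      _ = u m := by rw [hudef]; ring
  have hS0 : Summable (fun m => c m * (0:ℝ) ^ m) := by
    apply summable_of_ne_finset_zero (s := {0})
    intro m hm
    simp only [Finset.mem_singleton] at hm
    simp [zero_pow hm]
  have h0mem : (0:ℝ) ∈ Set.Ioo (-r) r := ⟨by linarith, hr0⟩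
  have hderiv : ∀ y ∈ Set.Ioo (-r) r,
      HasDerivAt (fun z => ∑' m, c m * z ^ m) (∑' m, c m * ((m : ℝ) * y ^ (m - 1))) y :=
    fun y hy => hasDerivAt_tsum_of_isPreconnected hu isOpen_Ioo (convex_Ioo _ _).isPreconnected
      hderivg hbound h0mem hS0 hy
  set S : ℝ → ℝ := fun z => ∑' m, c m * z ^ m with hSdef
  set D : ℝ → ℝ := fun y => ∑' m, c m * ((m : ℝ) * y ^ (m - 1)) with hDdef
  have hSy : ∀ y : ℝ, |y| ≤ r → Summable (fun m => c m * y ^ m) := by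
    intro y hy
    apply Summable.of_norm
    apply Summable.of_nonneg_of_le (fun m => norm_nonneg _) _ Sr
    intro m
    rw [Real.norm_eq_abs, abs_mul, habs, abs_pow]
    have hp : (0:ℝ) ≤ poch s m / m ! := by
      have := (poch_pos hs m).le; positivity
    calc poch s m / m ! * |y| ^ m ≤ poch s m / m ! * r ^ m := by
          apply mul_le_mul_of_nonneg_left (pow_le_pow_left₀ (abs_nonneg y) hy m) hp
      _ ≤ poch s m / m ! * (m + 1) * r ^ m := by
          have h2 : (0:ℝ) ≤ r ^ m := by positivity
          have hm0 : (0:ℝ) ≤ (m:ℝ) := Nat.cast_nonneg m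
          nlinarith [mul_nonneg (mul_nonneg hp h2) hm0]
  have hDy : ∀ y ∈ Set.Ioo (-r) r, Summable (fun m => c m * ((m : ℝ) * y ^ (m - 1))) := by
    intro y hy
    apply Summable.of_norm
    apply Summable.of_nonneg_of_le (fun m => norm_nonneg _) (fun m => hbound m y hy) hu
  have hODE : ∀ y ∈ Set.Ioo (-r) r, (1 + y) * D y + s * S y = 0 := by
    intro y hy
    have hD : HasSum (fun m => c m * ((m : ℝ) * y ^ (m - 1))) (D y) := (hDy y hy).hasSum
    have h1' : HasSum (fun m => c (m + 1) * (((m : ℝ) + 1) * y ^ m)) (D y) := by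
      have hsh : HasSum (fun m => c m * ((m : ℝ) * y ^ (m - 1)))
          (D y + ∑ i ∈ Finset.range 1, c i * ((i : ℝ) * y ^ (i - 1))) := by simpa using hD
      have h2 := (hasSum_nat_add_iff (f := fun m => c m * ((m : ℝ) * y ^ (m - 1))) 1).mpr hsh
      simp only [Nat.add_sub_cancel, Nat.cast_add, Nat.cast_one] at h2
      exact h2
    have h2' : HasSum (fun m => c m * (m : ℝ) * y ^ m) (D y * y) := by
      have := hD.mul_right y
      have e : (fun m => c m * ((m : ℝ) * y ^ (m - 1)) * y) = fun m => c m * (m : ℝ) * y ^ m := by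
        funext m
        match m with
        | 0 => simp
        | (k + 1) => simp only [Nat.add_sub_cancel, pow_succ]; push_cast; ring
      rwa [e] at this
    have h3' : HasSum (fun m => s * (c m * y ^ m)) (s * S y) :=
      (hSy y (hmem y hy)).hasSum.mul_left s
    have hadd := (h1'.add h2').add h3'
    have hzero : (fun m => c (m + 1) * (((m : ℝ) + 1) * y ^ m) + c m * (m : ℝ) * y ^ m
        + s * (c m * y ^ m)) = fun _ => (0:ℝ) := by
      funext m
      have h := hrec m
      linear_combination y ^ m * h
    rw [hzero] at hadd
    have := hadd.unique hasSum_zero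
    linarith [this]
  have hderivh : ∀ y ∈ Set.Ioo (-r) r,
      HasDerivAt (fun z => S z * (1 + z) ^ s) 0 y := by
    intro y hy
    have hy1 : 0 < 1 + y := by have := hy.1; simp at this ⊢; linarith
    have hpow : HasDerivAt (fun z : ℝ => (1 + z) ^ s) (1 * s * (1 + y) ^ (s - 1)) y :=
      ((hasDerivAt_id y).const_add 1).rpow_const (Or.inl hy1.ne')
    have hmul := (hderiv y hy).mul hpow
    have e : (1 + y) ^ s = (1 + y) ^ (s - 1) * (1 + y) := by
      have hadd := Real.rpow_add hy1 (s - 1) 1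
      rw [sub_add_cancel, Real.rpow_one] at hadd
      exact hadd
    have hval : D y * (1 + y) ^ s + S y * (1 * s * (1 + y) ^ (s - 1)) = 0 := by
      rw [e]
      have hode := hODE y hy
      linear_combination ((1 + y) ^ (s - 1)) * hode
    rw [hval] at hmul
    exact hmul
  have htmem : ∀ z ∈ Set.Icc (0:ℝ) t, z ∈ Set.Ioo (-r) r := by
    intro z hz
    exact ⟨by linarith [hz.1], by linarith [hz.2]⟩
  have hconst := constant_of_has_deriv_right_zero
    (f := fun z => S z * (1 + z) ^ s) (a := 0) (b := t)
    (fun y hy => ((hderivh y (htmem y hy)).continuousAt).continuousWithinAt)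
    (fun y hy => (hderivh y (htmem y ⟨hy.1, hy.2.le⟩)).hasDerivWithinAt)
  have hht := hconst t ⟨ht0, le_rfl⟩
  have hS0val : S 0 = 1 := by
    show (∑' m, c m * (0:ℝ) ^ m) = 1
    rw [tsum_eq_single 0 (fun m hm => by simp [zero_pow hm]), hc0]
    simp
  rw [hS0val] at hht
  simp only [add_zero, Real.one_rpow, one_mul] at hht
  -- hht : S t * (1 + t) ^ s = 1
  have h1t : (0:ℝ) < 1 + t := by linarith
  have hne : (1 + t) ^ s ≠ 0 := (Real.rpow_pos_of_pos h1t s).ne'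
  have hSt : S t = (1 + t) ^ (-s) := by
    rw [Real.rpow_neg h1t.le]
    field_simp
    linarith [hht]
  have hsumt : Summable (fun m => c m * t ^ m) := hSy t (by rw [abs_of_nonneg ht0]; exact htr.le)
  have := hsumt.hasSum
  rw [show (∑' m, c m * t ^ m) = S t from rfl, hSt] at this
  exact this

lemma poch_neg_nat (n k : ℕ) : poch (-(n : ℝ)) k = (-1) ^ k * (k ! : ℝ) * (n.choose k) := by
  induction k with
  | zero => simp [poch_zero]
  | succ k ih =>
    rw [poch_succ, ih]
    have hkey : (n.choose k : ℝ) * ((k : ℝ) - n) = -((k : ℝ) + 1) * (n.choose (k + 1)) := by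
      by_cases hk : k ≤ n
      · have h := Nat.choose_succ_right_eq n k
        have hcast : ((n - k : ℕ) : ℝ) = (n : ℝ) - k := by
          push_cast [Nat.cast_sub hk]; ring
        have h2 : (n.choose (k + 1) : ℝ) * ((k : ℝ) + 1) = (n.choose k : ℝ) * ((n : ℝ) - k) := by
          have hc := congrArg (Nat.cast : ℕ → ℝ) h
          push_cast [Nat.cast_sub hk] at hc
          linarith [hc]
        linarith [h2]
      · have h1 : n.choose k = 0 := Nat.choose_eq_zero_of_lt (by omega)
        have h2 : n.choose (k + 1) = 0 := Nat.choose_eq_zero_of_lt (by omega)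
        simp [h1, h2]
    have : -(n : ℝ) + k = (k : ℝ) - n := by ring
    rw [this]
    calc (-1:ℝ) ^ k * (k ! : ℝ) * (n.choose k) * ((k:ℝ) - n)
        = (-1:ℝ) ^ k * (k ! : ℝ) * ((n.choose k : ℝ) * ((k:ℝ) - n)) := by ring
      _ = (-1:ℝ) ^ k * (k ! : ℝ) * (-((k:ℝ)+1) * (n.choose (k+1))) := by rw [hkey]
      _ = (-1:ℝ) ^ (k+1) * ((k+1)! : ℝ) * (n.choose (k+1)) := by
          rw [pow_succ, Nat.factorial_succ]; push_cast; ring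

lemma vander (n j : ℕ) :
    ∑ k ∈ Finset.range (n + 1), (if k ≤ j then n.choose k * j.choose k else 0)
      = (n + j).choose j := by
  have hif : ∀ k, (if k ≤ j then n.choose k * j.choose k else 0) = n.choose k * j.choose k := by
    intro k
    by_cases h : k ≤ j
    · simp [h]
    · simp [h, Nat.choose_eq_zero_of_lt (by omega : j < k)]
  simp only [hif]
  have hext : ∀ M, n + 1 ≤ M →
      ∑ k ∈ Finset.range (n + 1), n.choose k * j.choose k
        = ∑ k ∈ Finset.range M, n.choose k * j.choose k := by
    intro M hM
    apply Finset.sum_subset (Finset.range_subset_range.mpr hM)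
    intro k _ hk
    simp only [Finset.mem_range, not_lt] at hk
    simp [Nat.choose_eq_zero_of_lt (by omega : n < k)]
  have hext2 : ∀ M, j + 1 ≤ M →
      ∑ k ∈ Finset.range (j + 1), n.choose k * j.choose k
        = ∑ k ∈ Finset.range M, n.choose k * j.choose k := by
    intro M hM
    apply Finset.sum_subset (Finset.range_subset_range.mpr hM)
    intro k _ hk
    simp only [Finset.mem_range, not_lt] at hk
    simp [Nat.choose_eq_zero_of_lt (by omega : j < k)]
  have hvand : (n + j).choose j = ∑ k ∈ Finset.range (j + 1), n.choose k * j.choose k := by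
    rw [Nat.add_choose_eq, Finset.Nat.sum_antidiagonal_eq_sum_range_succ_mk]
    apply Finset.sum_congr rfl
    intro k hk
    simp only [Finset.mem_range] at hk
    rw [Nat.choose_symm (by omega : k ≤ j)]
  rw [hvand, hext _ (le_max_left (n+1) (j+1)) , hext2 _ (le_max_right (n+1) (j+1))]

lemma key_hasSum (n : ℕ) {t : ℝ} (ht0 : 0 ≤ t) (ht1 : t < 1) :
    HasSum (fun j : ℕ => ((n + j).choose j : ℝ) * ((-1) ^ j * poch (1/2) j / (j ! : ℝ)) * t ^ j)
      ((1 + t) ^ (-(1/2) : ℝ) * F n (t / (1 + t))) := by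
  have h1t : (0:ℝ) < 1 + t := by linarith
  set a : ℕ → ℝ := fun k => poch (-(n:ℝ)) k * poch (1/2) k / ((k ! : ℝ) ^ 2) with ha
  set e : ℕ → ℕ → ℝ := fun k j => if k ≤ j then
    a k * ((-1) ^ (j - k) * poch ((k:ℝ) + 1/2) (j - k) / ((j - k)! : ℝ)) * t ^ j else 0 with he
  have step1 : ∀ k : ℕ, HasSum (fun j => e k j)
      (a k * (t / (1 + t)) ^ k * (1 + t) ^ (-(1/2) : ℝ)) := by
    intro k
    have hspos : (0:ℝ) < (k:ℝ) + 1/2 := by positivity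
    have hb := (binom_hasSum ((k:ℝ) + 1/2) hspos ht0 ht1).mul_left (a k * t ^ k)
    have hval : a k * t ^ k * ((1 + t) ^ (-((k:ℝ) + 1/2)) : ℝ)
        = a k * (t / (1 + t)) ^ k * (1 + t) ^ (-(1/2) : ℝ) := by
      have h1 : (-((k:ℝ) + 1/2)) = (-(k:ℝ)) + (-(1/2)) := by ring
      rw [h1, Real.rpow_add h1t, Real.rpow_neg h1t.le (k:ℝ), Real.rpow_natCast,
        div_pow, div_eq_mul_inv]
      ring
    rw [hval] at hb
    have hinj : Function.Injective (fun m : ℕ => m + k) := add_left_injective k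
    apply (Function.Injective.hasSum_iff hinj ?_).mp
    · have hcomp : ((fun j => e k j) ∘ fun m : ℕ => m + k)
          = fun m => a k * t ^ k * ((-1) ^ m * poch ((k:ℝ) + 1/2) m / m ! * t ^ m) := by
        funext m
        simp only [Function.comp, he, if_pos (Nat.le_add_left k m), Nat.add_sub_cancel]
        rw [pow_add]
        ring
      rw [hcomp]
      exact hb
    · intro x hx
      have hkx : ¬ k ≤ x := by
        intro hkx
        exact hx ⟨x - k, show x - k + k = x by omega⟩
      simp only [he, if_neg hkx]
  have step2 := hasSum_sum (f := fun k j => e k j) (s := Finset.range (n+1))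
    (fun k _ => step1 k)
  have step3 : (∑ k ∈ Finset.range (n+1), a k * (t / (1 + t)) ^ k * (1 + t) ^ (-(1/2) : ℝ))
      = (1 + t) ^ (-(1/2) : ℝ) * F n (t / (1 + t)) := by
    rw [F, Finset.mul_sum]
    apply Finset.sum_congr rfl
    intro k _
    rw [ha]
    ring
  rw [step3] at step2
  have step4 : ∀ j : ℕ, (∑ k ∈ Finset.range (n+1), e k j)
      = ((n + j).choose j : ℝ) * ((-1) ^ j * poch (1/2) j / (j ! : ℝ)) * t ^ j := by
    intro j
    have hterm : ∀ k, k ∈ Finset.range (n+1) → e k j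
        = (if k ≤ j then ((n.choose k * j.choose k : ℕ) : ℝ) else 0)
          * ((-1) ^ j * poch (1/2) j / (j ! : ℝ)) * t ^ j := by
      intro k _
      by_cases hkj : k ≤ j
      · rw [he]
        simp only [if_pos hkj]
        have hpm : poch (1/2) k * poch (1/2 + (k:ℝ)) (j - k) = poch (1/2) j := by
          rw [poch_mul]
          congr 1
          omega
        have hsign : ((-1:ℝ)) ^ k * (-1) ^ (j - k) = (-1) ^ j := by
          rw [← pow_add]
          congr 1
          omega
        have hchoose : (j.choose k : ℝ) = (j ! : ℝ) / ((k ! : ℝ) * ((j - k)! : ℝ)) :=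
          Nat.cast_choose ℝ hkj
        have hkf : ((k ! : ℝ)) ≠ 0 := by positivity
        have hjkf : (((j - k)! : ℝ)) ≠ 0 := by positivity
        have hjf : ((j ! : ℝ)) ≠ 0 := by positivity
        rw [ha]
        simp only [poch_neg_nat]
        push_cast
        rw [show ((k:ℝ) + 1/2) = 1/2 + (k:ℝ) by ring]
        rw [← hpm, ← hsign, hchoose]
        field_simp
      · rw [he]
        simp only [if_neg hkj]
        simp
    rw [Finset.sum_congr rfl hterm, ← Finset.sum_mul, ← Finset.sum_mul]
    congr 2
    have hv : ((∑ k ∈ Finset.range (n + 1), if k ≤ j then n.choose k * j.choose k else 0 : ℕ) : ℝ)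
        = (((n + j).choose j : ℕ) : ℝ) := by exact_mod_cast congrArg (Nat.cast : ℕ → ℝ) (vander n j)
    push_cast at hv
    rw [← hv]
    apply Finset.sum_congr rfl
    intro k _
    by_cases h : k ≤ j <;> simp [h]
  have hfun : (fun j => ∑ k ∈ Finset.range (n+1), e k j)
      = fun j => ((n + j).choose j : ℝ) * ((-1) ^ j * poch (1/2) j / (j ! : ℝ)) * t ^ j :=
    funext step4
  rwa [hfun] at step2

theorem B_integral_rep (n : ℕ) (x : ℝ) (hx : x ∈ Set.Ioo (0:ℝ) 1) :
    (∑' j : ℕ, ((n + j).choose j : ℝ) * ((-1) ^ j * poch (1/2) j /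
        ((2 * ((n : ℝ) + j) + 3) * (j ! : ℝ))) * x ^ j) =
      1 / (2 * x ^ ((n : ℝ) + 3/2)) *
        ∫ t in (0:ℝ)..x, t ^ ((n : ℝ) + 1/2) / Real.sqrt (1 + t) * F n (t / (1 + t)) := by
  obtain ⟨hx0, hx1⟩ := hx
  set d : ℕ → ℝ := fun j => ((n + j).choose j : ℝ) * ((-1) ^ j * poch (1/2) j / (j ! : ℝ))
    with hd
  set f : ℕ → ℝ → ℝ := fun j t => d j * t ^ ((n : ℝ) + 1/2 + j) with hf
  set G : ℝ → ℝ := fun t => t ^ ((n : ℝ) + 1/2) / Real.sqrt (1 + t) * F n (t / (1 + t)) with hG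
  -- continuity and integrability of f j
  have hcont : ∀ j : ℕ, Continuous (f j) := by
    intro j
    have hc : Continuous fun t : ℝ => t ^ ((n : ℝ) + 1/2 + j) := by
      rw [continuous_iff_continuousAt]
      intro t
      apply Real.continuousAt_rpow_const t _ (Or.inr (by positivity))
    exact continuous_const.mul hc
  -- the basic rpow integral
  have hpow_int : ∀ j : ℕ, ∫ t in Set.Ioc (0:ℝ) x, t ^ ((n : ℝ) + 1/2 + j)
      = x ^ ((n : ℝ) + 1/2 + j + 1) / ((n : ℝ) + 1/2 + j + 1) := by
    intro j
    have hj0 : (0:ℝ) ≤ (j:ℝ) := Nat.cast_nonneg j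
    have hn0 : (0:ℝ) ≤ (n:ℝ) := Nat.cast_nonneg n
    rw [← intervalIntegral.integral_of_le hx0.le]
    rw [integral_rpow (Or.inl (by linarith))]
    rw [Real.zero_rpow (by linarith : (n : ℝ) + 1/2 + j + 1 ≠ 0)]
    ring
  have hfint : ∀ j : ℕ, ∫ t in Set.Ioc (0:ℝ) x, f j t
      = d j * (x ^ ((n : ℝ) + 1/2 + j + 1) / ((n : ℝ) + 1/2 + j + 1)) := by
    intro j
    rw [hf]
    rw [MeasureTheory.integral_const_mul, hpow_int j]
  -- integrability of each f j
  have hfi : ∀ j : ℕ, MeasureTheory.IntegrableOn (f j) (Set.Ioc (0:ℝ) x) := by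
    intro j
    exact (hcont j).integrableOn_Ioc
  -- summable majorant
  have hmaj : Summable (fun j : ℕ => ((n + j).choose j : ℝ) * x ^ j) := by
    have h1 : Summable (fun j : ℕ => (((j + n).choose n : ℕ) : ℝ) * x ^ j) :=
      summable_choose_mul_geometric_of_norm_lt_one n
        (by rw [Real.norm_eq_abs, abs_of_nonneg hx0.le]; exact hx1)
    apply h1.congr
    intro j
    congr 2
    rw [Nat.add_comm j n]
    have := Nat.choose_symm (Nat.le_add_left j n)
    rw [show n + j - j = n by omega] at this
    rw [this]
  have hdle : ∀ j : ℕ, |d j| ≤ ((n + j).choose j : ℝ) := by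
    intro j
    rw [hd]
    have hp1 : 0 < poch (1/2) j := poch_pos (by norm_num) j
    have hple : poch (1/2) j ≤ (j ! : ℝ) := by
      have := poch_le (a := 1/2) (b := 1) (by norm_num) (by norm_num) j
      rwa [poch_one] at this
    have hjf : (0:ℝ) < (j ! : ℝ) := by positivity
    rw [abs_mul, abs_div, abs_mul, abs_pow, abs_neg, abs_one, one_pow, one_mul,
      abs_of_pos hp1, Nat.abs_cast, Nat.abs_cast]
    calc ((n + j).choose j : ℝ) * (poch (1/2) j / (j ! : ℝ))
        ≤ ((n + j).choose j : ℝ) * 1 := by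
          apply mul_le_mul_of_nonneg_left _ (Nat.cast_nonneg _)
          rw [div_le_one hjf]
          exact hple
      _ = ((n + j).choose j : ℝ) := by ring
  -- the norm integrals are summably bounded
  have hnorm_int : ∀ j : ℕ, ∫⁻ t in Set.Ioc (0:ℝ) x, ‖f j t‖₊
      = ENNReal.ofReal (|d j| * (x ^ ((n : ℝ) + 1/2 + j + 1) / ((n : ℝ) + 1/2 + j + 1))) := by
    intro j
    refine (MeasureTheory.ofReal_integral_norm_eq_lintegral_enorm (hfi j)).symm.trans ?_
    · congr 1
      have heq : Set.EqOn (fun t => ‖f j t‖) (fun t => |d j| * t ^ ((n : ℝ) + 1/2 + j))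
          (Set.Ioc (0:ℝ) x) := by
        intro t ht
        simp only [hf, Real.norm_eq_abs, abs_mul]
        rw [abs_of_nonneg (Real.rpow_nonneg ht.1.le _)]
      rw [MeasureTheory.setIntegral_congr_fun measurableSet_Ioc heq,
        MeasureTheory.integral_const_mul, hpow_int j]
  have hbound : ∀ j : ℕ, |d j| * (x ^ ((n : ℝ) + 1/2 + j + 1) / ((n : ℝ) + 1/2 + j + 1))
      ≤ ((n + j).choose j : ℝ) * x ^ j := by
    intro j
    have hj0 : (0:ℝ) ≤ (j:ℝ) := Nat.cast_nonneg j
    have hn0 : (0:ℝ) ≤ (n:ℝ) := Nat.cast_nonneg n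
    have hden : (1:ℝ) ≤ (n : ℝ) + 1/2 + j + 1 := by linarith
    have hxp : x ^ ((n : ℝ) + 1/2 + j + 1) ≤ x ^ (j:ℝ) := by
      apply Real.rpow_le_rpow_of_exponent_ge hx0 hx1.le
      linarith
    have hxj : x ^ ((j:ℝ)) = x ^ j := Real.rpow_natCast x j
    have h1 : x ^ ((n : ℝ) + 1/2 + j + 1) / ((n : ℝ) + 1/2 + j + 1) ≤ x ^ j := by
      rw [← hxj]
      calc x ^ ((n : ℝ) + 1/2 + j + 1) / ((n : ℝ) + 1/2 + j + 1)
          ≤ x ^ ((n : ℝ) + 1/2 + j + 1) := div_le_self (Real.rpow_nonneg hx0.le _) hden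
        _ ≤ x ^ ((j:ℝ)) := hxp
    exact mul_le_mul (hdle j) h1 (by positivity) (Nat.cast_nonneg _)
  have hne : (∑' j, ∫⁻ t in Set.Ioc (0:ℝ) x, ‖f j t‖₊) ≠ ⊤ := by
    have hle : (∑' j, ∫⁻ t in Set.Ioc (0:ℝ) x, ‖f j t‖₊)
        ≤ ∑' j, ENNReal.ofReal (((n + j).choose j : ℝ) * x ^ j) := by
      apply ENNReal.tsum_le_tsum
      intro j
      rw [hnorm_int j]
      exact ENNReal.ofReal_le_ofReal (hbound j)
    have heq : (∑' j, ENNReal.ofReal (((n + j).choose j : ℝ) * x ^ j))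
        = ENNReal.ofReal (∑' j, ((n + j).choose j : ℝ) * x ^ j) := by
      rw [ENNReal.ofReal_tsum_of_nonneg (fun j => by positivity) hmaj]
    exact ne_top_of_le_ne_top (by rw [heq]; exact ENNReal.ofReal_ne_top) hle
  -- swap integral and sum
  have hswap : ∫ t in Set.Ioc (0:ℝ) x, (∑' j, f j t) = ∑' j, ∫ t in Set.Ioc (0:ℝ) x, f j t :=
    MeasureTheory.integral_tsum (fun j => (hcont j).aestronglyMeasurable.restrict) hne
  -- pointwise identity on Ioc
  have hptwise : Set.EqOn G (fun t => ∑' j, f j t) (Set.Ioc (0:ℝ) x) := by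
    intro t ht
    obtain ⟨ht0, htx⟩ := ht
    have ht1 : t < 1 := lt_of_le_of_lt htx hx1
    have h1t : (0:ℝ) < 1 + t := by linarith
    have hts := (key_hasSum n ht0.le ht1).tsum_eq
    have hterm : ∀ j : ℕ, f j t = t ^ ((n : ℝ) + 1/2)
        * (((n + j).choose j : ℝ) * ((-1) ^ j * poch (1/2) j / (j ! : ℝ)) * t ^ j) := by
      intro j
      have hre : t ^ ((n : ℝ) + 1/2 + j) = t ^ ((n : ℝ) + 1/2) * t ^ j := by
        rw [Real.rpow_add ht0, Real.rpow_natCast]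
      simp only [hf, hd]
      rw [hre]
      ring
    have hval : t ^ ((n : ℝ) + 1/2) * ((1 + t) ^ (-(1/2) : ℝ) * F n (t / (1 + t))) = G t := by
      rw [hG]
      rw [Real.rpow_neg h1t.le, ← Real.sqrt_eq_rpow]
      ring
    calc G t = t ^ ((n : ℝ) + 1/2) * ((1 + t) ^ (-(1/2) : ℝ) * F n (t / (1 + t))) := hval.symm
      _ = t ^ ((n : ℝ) + 1/2) * (∑' j, ((n + j).choose j : ℝ)
            * ((-1) ^ j * poch (1/2) j / (j ! : ℝ)) * t ^ j) := by rw [hts]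
      _ = ∑' j, t ^ ((n : ℝ) + 1/2) * (((n + j).choose j : ℝ)
            * ((-1) ^ j * poch (1/2) j / (j ! : ℝ)) * t ^ j) := by rw [tsum_mul_left]
      _ = ∑' j, f j t := by
            apply tsum_congr
            intro j
            exact (hterm j).symm
  -- put it all together
  rw [intervalIntegral.integral_of_le hx0.le]
  rw [show (fun t => t ^ ((n : ℝ) + 1/2) / Real.sqrt (1 + t) * F n (t / (1 + t))) = G from rfl]
  rw [MeasureTheory.setIntegral_congr_fun measurableSet_Ioc hptwise, hswap]
  rw [funext hfint]
  rw [← tsum_mul_left]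
  apply tsum_congr
  intro j
  have hj0 : (0:ℝ) ≤ (j:ℝ) := Nat.cast_nonneg j
  have hn0 : (0:ℝ) ≤ (n:ℝ) := Nat.cast_nonneg n
  have hxs : (0:ℝ) < x ^ ((n : ℝ) + 3/2) := Real.rpow_pos_of_pos hx0 _
  have hsplit : x ^ ((n : ℝ) + 1/2 + j + 1) = x ^ ((n : ℝ) + 3/2) * x ^ j := by
    rw [show (n : ℝ) + 1/2 + j + 1 = ((n : ℝ) + 3/2) + (j:ℝ) by ring]
    rw [Real.rpow_add hx0, Real.rpow_natCast]
  rw [hd, hsplit]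
  have hjf : (0:ℝ) < (j ! : ℝ) := by positivity
  have hden1 : ((n : ℝ) + 1/2 + j + 1) ≠ 0 := by linarith
  have hden2 : (2 * ((n : ℝ) + j) + 3) ≠ 0 := by linarith
  field_simp
  ring
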